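/- Let T = conv{v_0, v_1, …, v_n} be a full-dimensional simplex in ℝ^n with all vertices v_0, …, v_n ∈ ℤ^n. Then for every i ∈ {1, …, n}, μ_i(T) ≤ i. -/

import Mathlib

open MeasureTheory Pointwise

/-- The integer lattice `ℤⁿ` viewed as a subset of `ℝⁿ`. -/
def intLattice (n : ℕ) : Set (EuclideanSpace ℝ (Fin n)) :=
  {x | ∀ j, ∃ m : ℤ, x j = (m : ℝ)}

/-- The `i`-th covering minimum `μ_i(K, ℤⁿ)` of a convex body `K ⊆ ℝⁿ`:
the least `μ > 0` such that `μK + ℤⁿ` meets every `(n-i)`-dimensional affine subspace. -/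
noncomputable def covMin (n i : ℕ) (K : Set (EuclideanSpace ℝ (Fin n))) : ℝ :=
  sInf {μ : ℝ | 0 < μ ∧ ∀ L : AffineSubspace ℝ (EuclideanSpace ℝ (Fin n)),
    (L : Set (EuclideanSpace ℝ (Fin n))).Nonempty →
    Module.finrank ℝ L.direction = n - i →
    ((μ • K + intLattice n) ∩ (L : Set (EuclideanSpace ℝ (Fin n)))).Nonempty}

lemma intLattice_zero (n : ℕ) : (0 : EuclideanSpace ℝ (Fin n)) ∈ intLattice n :=
  fun _ => ⟨0, by simp⟩

lemma intLattice_add {n : ℕ} {a b : EuclideanSpace ℝ (Fin n)}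
    (ha : a ∈ intLattice n) (hb : b ∈ intLattice n) : a + b ∈ intLattice n := by
  intro j
  obtain ⟨p, hp⟩ := ha j
  obtain ⟨q, hq⟩ := hb j
  exact ⟨p + q, by simp [PiLp.add_apply, hp, hq]⟩

lemma intLattice_sub {n : ℕ} {a b : EuclideanSpace ℝ (Fin n)}
    (ha : a ∈ intLattice n) (hb : b ∈ intLattice n) : a - b ∈ intLattice n := by
  intro j
  obtain ⟨p, hp⟩ := ha j
  obtain ⟨q, hq⟩ := hb j
  exact ⟨p - q, by simp [PiLp.sub_apply, hp, hq]⟩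

lemma intLattice_zsmul {n : ℕ} {a : EuclideanSpace ℝ (Fin n)} (m : ℤ)
    (ha : a ∈ intLattice n) : ((m : ℝ) • a) ∈ intLattice n := by
  intro j
  obtain ⟨p, hp⟩ := ha j
  exact ⟨m * p, by simp [PiLp.smul_apply, hp, smul_eq_mul]⟩

lemma intLattice_sum {n : ℕ} {α : Type*} (t : Finset α) (f : α → EuclideanSpace ℝ (Fin n))
    (h : ∀ a ∈ t, f a ∈ intLattice n) : (∑ a ∈ t, f a) ∈ intLattice n := by
  classical
  induction t using Finset.induction_on with
  | empty => simpa using intLattice_zero n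
  | insert _ _ hnm ih =>
    rw [Finset.sum_insert hnm]
    exact intLattice_add (h _ (Finset.mem_insert_self _ _))
      (ih fun a ha => h a (Finset.mem_insert_of_mem ha))

set_option maxHeartbeats 1000000 in
/-- For a full-dimensional simplex `T = conv{v_0, …, v_n}` in `ℝⁿ` with integral vertices,
`μ_i(T) ≤ i` for every `i ∈ {1, …, n}`. -/
theorem covMin_lattice_simplex_le (n : ℕ) (hn : 1 ≤ n)
    (v : Fin (n + 1) → EuclideanSpace ℝ (Fin n))
    (hint : ∀ k, v k ∈ intLattice n) (haff : AffineIndependent ℝ v)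
    (i : ℕ) (hi1 : 1 ≤ i) (hi2 : i ≤ n) :
    covMin n i (convexHull ℝ (Set.range v)) ≤ (i : ℝ) := by
  classical
  have hi0 : (0 : ℝ) < (i : ℝ) := by exact_mod_cast hi1
  have hi0' : (i : ℝ) ≠ 0 := ne_of_gt hi0
  apply csInf_le
  · exact ⟨0, fun μ hμ => le_of_lt hμ.1⟩
  refine ⟨hi0, ?_⟩
  rintro L ⟨x₀, hx₀⟩ hdim
  set D := L.direction with hD
  -- the edge vectors
  set u : Fin n → EuclideanSpace ℝ (Fin n) := fun j => v j.succ - v 0 with hu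
  have hu_li : LinearIndependent ℝ u := by
    have h1 := (affineIndependent_iff_linearIndependent_vsub ℝ v 0).1 haff
    have h2 : Function.Injective (fun j : Fin n => (⟨j.succ, Fin.succ_ne_zero j⟩ :
        {x : Fin (n + 1) // x ≠ 0})) := by
      intro a b hab
      simpa using Fin.succ_injective n (congrArg Subtype.val hab)
    have := h1.comp _ h2
    convert this using 1 <;> rfl
  haveI : Nonempty (Fin n) := ⟨⟨0, hn⟩⟩
  have hcardn : Fintype.card (Fin n) = Module.finrank ℝ (EuclideanSpace ℝ (Fin n)) := by
    simp [finrank_euclideanSpace_fin]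
  have hu_span : Submodule.span ℝ (Set.range u) = ⊤ :=
    hu_li.span_eq_top_of_card_eq_finrank hcardn
  -- quotient by D
  set π := D.mkQ with hπ
  have hVspan : Submodule.span ℝ (Set.range (π ∘ u)) = ⊤ := by
    rw [Set.range_comp, Submodule.span_image, hu_span, Submodule.map_top,
      Submodule.range_mkQ]
  have hfinQ : Module.finrank ℝ (EuclideanSpace ℝ (Fin n) ⧸ D) = i := by
    have h := Submodule.finrank_quotient_add_finrank D
    rw [finrank_euclideanSpace_fin, hdim] at h
    omega
  obtain ⟨s, hs_sub, hs_span, hs_li⟩ := exists_linearIndependent ℝ (Set.range (π ∘ u))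
  have hs_fin : s.Finite := (Set.finite_range _).subset hs_sub
  set sF := hs_fin.toFinset with hsF
  have hmem_sF : ∀ x, x ∈ sF ↔ x ∈ s := fun x => hs_fin.mem_toFinset
  have hcard : (sF.card : ℝ) ≤ (i : ℝ) := by
    have hinj : Function.Injective
        (fun x : {y // y ∈ sF} => (⟨x.1, (hmem_sF x.1).1 x.2⟩ : s)) := by
      intro a b hab
      exact Subtype.ext (by simpa using hab)
    have hli2 : LinearIndependent ℝ
        (fun x : {y // y ∈ sF} => (x : EuclideanSpace ℝ (Fin n) ⧸ D)) :=
      hs_li.comp _ hinj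
    have h := hli2.finset_card_le_finrank
    rw [hfinQ] at h
    exact_mod_cast h
  -- choose indices
  have hsel : ∀ x ∈ sF, ∃ j : Fin n, π (u j) = x := by
    intro x hx
    obtain ⟨j, hj⟩ := hs_sub ((hmem_sF x).1 hx)
    exact ⟨j, hj⟩
  choose! jf hjf using hsel
  -- coefficients
  have hy_mem : π (x₀ - (i : ℝ) • v 0) ∈ Submodule.span ℝ (sF : Set _) := by
    rw [hs_fin.coe_toFinset, hs_span, hVspan]; trivial
  obtain ⟨c, -, hc⟩ := Submodule.mem_span_finset.1 hy_mem
  set lam : (EuclideanSpace ℝ (Fin n) ⧸ D) → ℝ := fun x => Int.fract (c x) with hlam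
  have hlam_nonneg : ∀ x, 0 ≤ lam x := fun x => Int.fract_nonneg _
  have hlam_le_one : ∀ x, lam x ≤ 1 := fun x => (Int.fract_lt_one _).le
  have hlam_sum_le : (∑ x ∈ sF, lam x) ≤ (i : ℝ) := by
    calc (∑ x ∈ sF, lam x) ≤ ∑ _x ∈ sF, (1 : ℝ) :=
          Finset.sum_le_sum fun x _ => hlam_le_one x
      _ = (sF.card : ℝ) := by simp
      _ ≤ (i : ℝ) := hcard
  set q : EuclideanSpace ℝ (Fin n) :=
    (i : ℝ) • v 0 + ∑ x ∈ sF, lam x • u (jf x) with hq_def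
  set z : EuclideanSpace ℝ (Fin n) := ∑ x ∈ sF, ((⌊c x⌋ : ℝ)) • u (jf x) with hz_def
  -- q ∈ i • K
  set x_pt : EuclideanSpace ℝ (Fin n) :=
    v 0 + ∑ x ∈ sF, (lam x / i) • u (jf x) with hx_pt_def
  have hq_eq : q = (i : ℝ) • x_pt := by
    rw [hx_pt_def, smul_add, Finset.smul_sum, hq_def]
    congr 1
    refine Finset.sum_congr rfl fun x _ => ?_
    rw [smul_smul, mul_comm, div_mul_cancel₀ _ hi0']
  have hx_pt_mem : x_pt ∈ convexHull ℝ (Set.range v) := by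
    have hinj : ∀ a ∈ sF, ∀ b ∈ sF,
        (some a : Option (EuclideanSpace ℝ (Fin n) ⧸ D)) = some b → a = b := by
      intro a _ b _ hab; simpa using hab
    have h0 : (none : Option (EuclideanSpace ℝ (Fin n) ⧸ D)) ∉ sF.image some := by simp
    have hmem : ∑ o ∈ insert none (sF.image some),
        (Option.elim o (1 - (∑ x ∈ sF, lam x) / i) (fun x => lam x / i)) •
          (Option.elim o (v 0) (fun x => v (jf x).succ))
        ∈ convexHull ℝ (Set.range v) := by
      refine (convex_convexHull ℝ (Set.range v)).sum_mem ?_ ?_ ?_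
      · rintro (_ | x) _
        · have : (∑ x ∈ sF, lam x) / i ≤ 1 := by
            rw [div_le_one hi0]; exact hlam_sum_le
          simpa using by linarith
        · exact div_nonneg (hlam_nonneg x) hi0.le
      · rw [Finset.sum_insert h0, Finset.sum_image hinj]
        simp only [Option.elim_none, Option.elim_some]
        rw [← Finset.sum_div]
        ring
      · rintro (_ | x) _
        · exact subset_convexHull ℝ _ (Set.mem_range_self 0)
        · exact subset_convexHull ℝ _ (Set.mem_range_self _)
    have hxpt_eq : x_pt = ∑ o ∈ insert none (sF.image some),
        (Option.elim o (1 - (∑ x ∈ sF, lam x) / i) (fun x => lam x / i)) •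
          (Option.elim o (v 0) (fun x => v (jf x).succ)) := by
      rw [Finset.sum_insert h0, Finset.sum_image hinj]
      simp only [Option.elim_none, Option.elim_some]
      rw [hx_pt_def]
      have h1 : ∀ x ∈ sF, (lam x / i) • u (jf x)
          = (lam x / i) • v (jf x).succ - (lam x / i) • v 0 := by
        intro x _; rw [hu]; simp [smul_sub]
      rw [Finset.sum_congr rfl h1, Finset.sum_sub_distrib, ← Finset.sum_smul,
        sub_smul, one_smul, Finset.sum_div]
      abel
    rw [hxpt_eq]; exact hmem
  have hq_mem : q ∈ (i : ℝ) • convexHull ℝ (Set.range v) := by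
    rw [hq_eq]; exact Set.smul_mem_smul_set hx_pt_mem
  -- z is a lattice vector
  have hz_mem : z ∈ intLattice n := by
    refine intLattice_sum _ _ fun x _ => ?_
    exact intLattice_zsmul _ (intLattice_sub (hint _) (hint 0))
  -- q + z ∈ L
  have hker : q + z - x₀ ∈ D := by
    rw [← Submodule.ker_mkQ D, LinearMap.mem_ker]
    have hsum1 : π (∑ x ∈ sF, lam x • u (jf x)) = ∑ x ∈ sF, lam x • x := by
      rw [map_sum]
      exact Finset.sum_congr rfl fun x hx => by rw [_root_.map_smul, hjf x hx]
    have hsum2 : π (∑ x ∈ sF, ((⌊c x⌋ : ℝ)) • u (jf x)) = ∑ x ∈ sF, ((⌊c x⌋ : ℝ)) • x := by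
      rw [map_sum]
      exact Finset.sum_congr rfl fun x hx => by rw [_root_.map_smul, hjf x hx]
    have hcomb : (∑ x ∈ sF, lam x • x) + ∑ x ∈ sF, ((⌊c x⌋ : ℝ)) • x
        = ∑ x ∈ sF, c x • x := by
      rw [← Finset.sum_add_distrib]
      refine Finset.sum_congr rfl fun x _ => ?_
      rw [← add_smul, hlam, Int.fract_add_floor]
    have hc' : π x₀ - (i : ℝ) • π (v 0) = ∑ x ∈ sF, c x • x := by
      rw [hc, map_sub, _root_.map_smul]
    show π (q + z - x₀) = 0
    rw [map_sub, map_add, hq_def, hz_def, map_add, _root_.map_smul, hsum1, hsum2]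
    have hre : ((i : ℝ) • π (v 0) + ∑ x ∈ sF, lam x • x) + (∑ x ∈ sF, ((⌊c x⌋ : ℝ)) • x)
        = (i : ℝ) • π (v 0) + ((∑ x ∈ sF, lam x • x) + ∑ x ∈ sF, ((⌊c x⌋ : ℝ)) • x) := by
      abel
    rw [hre, hcomb, ← hc']
    abel
  have hqz_L : q + z ∈ (L : Set (EuclideanSpace ℝ (Fin n))) := by
    have := AffineSubspace.vadd_mem_of_mem_direction (hD ▸ hker) hx₀
    simpa [vadd_eq_add, sub_add_cancel] using this
  exact ⟨q + z, Set.add_mem_add hq_mem hz_mem, hqz_L⟩
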